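/- Let R be a graded commutative 2-ring. Then the set of prime homogeneous ideals of R is empty if and only if the identity morphism of the tensor unit of R is the zero morphism (equivalently, every object of R is a zero object, i.e. R is equivalent to the zero category; equivalently, every morphism of R is invertible). -/

import Mathlib

open CategoryTheory CategoryTheory.Limits CategoryTheory.MonoidalCategory

universe w v u v' u' v'' u''

/-- A *graded commutative 2-ring*: an essentially small preadditive symmetric monoidal
category whose tensor product is additive in each variable and in which every object
is invertible for the tensor product. -/
class GradedComm2Ring (C : Type u) [Category.{v} C] [Preadditive C] [MonoidalCategory C]
    [SymmetricCategory C] [MonoidalPreadditive C] : Prop where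
  essentiallySmall : EssentiallySmall.{v} C
  invertible : ∀ g : C, ∃ g' : C, Nonempty (g ⊗ g' ≅ 𝟙_ C)
section IdealDef

variable (C : Type u) [Category.{v} C] [Preadditive C] [MonoidalCategory C]

/-- A *homogeneous ideal* of a graded commutative 2-ring: a family of subgroups
`I(g,h) ⊆ Hom(g,h)` closed under composition with arbitrary morphisms on either side
and under tensoring with arbitrary morphisms on either side. -/
structure HomIdeal where
  carrier : ∀ g h : C, AddSubgroup (g ⟶ h)
  comp_left : ∀ {g h h' : C} (r : g ⟶ h) (s : h ⟶ h'),
      r ∈ carrier g h → r ≫ s ∈ carrier g h'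
  comp_right : ∀ {g' g h : C} (t : g' ⟶ g) (r : g ⟶ h),
      r ∈ carrier g h → t ≫ r ∈ carrier g' h
  tensor_left : ∀ {g h g' h' : C} (s : g' ⟶ h') (r : g ⟶ h),
      r ∈ carrier g h → (s ⊗ₘ r) ∈ carrier (g' ⊗ g) (h' ⊗ h)
  tensor_right : ∀ {g h g' h' : C} (r : g ⟶ h) (s : g' ⟶ h'),
      r ∈ carrier g h → (r ⊗ₘ s) ∈ carrier (g ⊗ g') (h ⊗ h')

variable {C}

namespace HomIdeal

instance : PartialOrder (HomIdeal C) where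
  le I J := ∀ g h : C, I.carrier g h ≤ J.carrier g h
  le_refl I g h := le_rfl
  le_trans I J K h₁ h₂ g h := (h₁ g h).trans (h₂ g h)
  le_antisymm I J h₁ h₂ := by
    cases I; cases J
    congr
    funext g h
    exact le_antisymm (h₁ g h) (h₂ g h)

/-- A homogeneous ideal is *proper* if it contains no identity morphism. -/
def IsProper (I : HomIdeal C) : Prop := ∀ g : C, 𝟙 g ∉ I.carrier g g

/-- A proper homogeneous ideal is *prime* if whenever a composite belongs to it, one
of the factors belongs to it. -/
structure IsPrime (I : HomIdeal C) : Prop where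
  isProper : I.IsProper
  mem_or_mem : ∀ {g h l : C} (r : g ⟶ h) (s : h ⟶ l),
      r ≫ s ∈ I.carrier g l → r ∈ I.carrier g h ∨ s ∈ I.carrier h l

end HomIdeal

end IdealDef
section SpecDef

/-- The (homogeneous) spectrum: the set of prime homogeneous ideals. -/
def Spec (C : Type u) [Category.{v} C] [Preadditive C] [MonoidalCategory C] :=
  {p : HomIdeal C // p.IsPrime}

variable {C : Type u} [Category.{v} C] [Preadditive C] [MonoidalCategory C]

/-- The closed set `V(I) = {p : I ⊆ p}`. -/
def zeroLocus (I : HomIdeal C) : Set (Spec C) := {p | I ≤ p.1}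

/-- The basic open set `D_r = {p : r ∉ p}`. -/
def basicOpen {g h : C} (r : g ⟶ h) : Set (Spec C) := {p | r ∉ p.1.carrier g h}

/-- The Zariski topology on `Spec C`, whose closed sets are the sets `V(I)` for
homogeneous ideals `I`. -/
instance : TopologicalSpace (Spec C) :=
  TopologicalSpace.generateFrom {U : Set (Spec C) | ∃ I : HomIdeal C, U = (zeroLocus I)ᶜ}

end SpecDef

section AuxProofs

namespace GC2Aux
set_option linter.unusedSectionVars false
variable {C : Type u} [Category.{v} C] [Preadditive C] [MonoidalCategory C]

/-- Scaling a morphism by an endomorphism of the tensor unit. -/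
def sc (u : 𝟙_ C ⟶ 𝟙_ C) {a b : C} (f : a ⟶ b) : a ⟶ b :=
  (λ_ a).inv ≫ (u ⊗ₘ f) ≫ (λ_ b).hom

theorem sc_comp_left (u : 𝟙_ C ⟶ 𝟙_ C) {a b c : C} (f : a ⟶ b) (g : b ⟶ c) :
    sc u (f ≫ g) = sc u f ≫ g := by
  have : u ⊗ₘ (f ≫ g) = (u ⊗ₘ f) ≫ (𝟙 (𝟙_ C) ⊗ₘ g) := by
    rw [MonoidalCategory.tensorHom_comp_tensorHom]; simp
  simp only [sc, this, Category.assoc, MonoidalCategory.id_tensorHom,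
    MonoidalCategory.leftUnitor_naturality]

theorem sc_comp_right (u : 𝟙_ C ⟶ 𝟙_ C) {a b c : C} (f : a ⟶ b) (g : b ⟶ c) :
    sc u (f ≫ g) = f ≫ sc u g := by
  have : u ⊗ₘ (f ≫ g) = (𝟙 (𝟙_ C) ⊗ₘ f) ≫ (u ⊗ₘ g) := by
    rw [MonoidalCategory.tensorHom_comp_tensorHom]; simp
  simp only [sc, this, Category.assoc, MonoidalCategory.id_tensorHom]
  rw [← MonoidalCategory.leftUnitor_inv_naturality_assoc]

theorem sc_one {a b : C} (f : a ⟶ b) : sc (𝟙 (𝟙_ C)) f = f := by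
  simp [sc, MonoidalCategory.id_tensorHom, MonoidalCategory.leftUnitor_naturality]

theorem sc_eq_comp (u : 𝟙_ C ⟶ 𝟙_ C) {a b : C} (f : a ⟶ b) :
    sc u f = sc u (𝟙 a) ≫ f := by
  conv_lhs => rw [← Category.id_comp f, sc_comp_left]

theorem sc_id_comp_sc_id (u v : 𝟙_ C ⟶ 𝟙_ C) (a : C) :
    sc u (𝟙 a) ≫ sc v (𝟙 a) = sc (u ≫ v) (𝟙 a) := by
  simp only [sc, Category.assoc, Iso.hom_inv_id_assoc]
  rw [MonoidalCategory.tensorHom_comp_tensorHom_assoc]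
  simp

theorem sc_sc (u v : 𝟙_ C ⟶ 𝟙_ C) {a b : C} (f : a ⟶ b) :
    sc u (sc v f) = sc (v ≫ u) f := by
  rw [sc_eq_comp v f, sc_comp_right, sc_eq_comp u, ← Category.assoc,
    sc_id_comp_sc_id, ← sc_eq_comp]

theorem sc_unit (u : 𝟙_ C ⟶ 𝟙_ C) : sc u (𝟙 (𝟙_ C)) = u := by
  simp only [sc, MonoidalCategory.tensorHom_id]
  rw [MonoidalCategory.unitors_equal, MonoidalCategory.rightUnitor_naturality,
    ← MonoidalCategory.unitors_equal]
  simp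

theorem sc_id_tensor_id (u : 𝟙_ C ⟶ 𝟙_ C) (X k : C) :
    sc u (𝟙 X) ⊗ₘ 𝟙 k = sc u (𝟙 (X ⊗ k)) := by
  simp only [sc, MonoidalCategory.tensorHom_id]
  rw [MonoidalCategory.whiskerRight_tensor, MonoidalCategory.leftUnitor_tensor_hom,
    MonoidalCategory.leftUnitor_tensor_inv]
  simp only [Category.assoc, Iso.hom_inv_id_assoc, MonoidalCategory.comp_whiskerRight]

theorem eq_of_tensor_unit_eq {Y : C} (psi : Y ≅ 𝟙_ C) {a b : C} {f g : a ⟶ b}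
    (h : f ⊗ₘ 𝟙 Y = g ⊗ₘ 𝟙 Y) : f = g := by
  have key : ∀ f' : a ⟶ b, (ρ_ a).inv ≫ ((𝟙 a ⊗ₘ psi.inv) ≫ (f' ⊗ₘ 𝟙 Y) ≫ (𝟙 b ⊗ₘ psi.hom)) ≫
      (ρ_ b).hom = f' := by
    intro f'
    rw [MonoidalCategory.tensorHom_comp_tensorHom, MonoidalCategory.tensorHom_comp_tensorHom]
    simp [MonoidalCategory.tensorHom_id, MonoidalCategory.rightUnitor_naturality]
  rw [← key f, ← key g, h]

theorem cancel_tensor_right {k m : C} (psi : k ⊗ m ≅ 𝟙_ C) {a b : C} {f g : a ⟶ b}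
    (h : f ⊗ₘ 𝟙 k = g ⊗ₘ 𝟙 k) : f = g := by
  refine eq_of_tensor_unit_eq psi ?_
  have key : ∀ f' : a ⟶ b, f' ⊗ₘ 𝟙 (k ⊗ m) =
      (α_ a k m).inv ≫ ((f' ⊗ₘ 𝟙 k) ⊗ₘ 𝟙 m) ≫ (α_ b k m).hom := by
    intro f'
    rw [MonoidalCategory.associator_naturality]
    simp [MonoidalCategory.id_tensorHom_id]
  rw [key f, key g, h]

/-- Tensor product of invertible objects is invertible. -/
def tensorInvIso {a a' b b' : C} (pa : a ⊗ a' ≅ 𝟙_ C) (pb : b ⊗ b' ≅ 𝟙_ C) :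
    (a ⊗ b) ⊗ (b' ⊗ a') ≅ 𝟙_ C :=
  (α_ a b (b' ⊗ a')) ≪≫
    (MonoidalCategory.whiskerLeftIso a
      ((α_ b b' a').symm ≪≫ MonoidalCategory.whiskerRightIso pb a' ≪≫ (λ_ a'))) ≪≫ pa

theorem sc_surj [BraidedCategory C] {X k : C} (phi : X ⊗ k ≅ 𝟙_ C) (e : X ⟶ X) :
    ∃ u : 𝟙_ C ⟶ 𝟙_ C, sc u (𝟙 X) = e := by
  refine ⟨phi.inv ≫ (e ⊗ₘ 𝟙 k) ≫ phi.hom, ?_⟩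
  have h1 : sc (phi.inv ≫ (e ⊗ₘ 𝟙 k) ≫ phi.hom) (𝟙 (X ⊗ k)) = e ⊗ₘ 𝟙 k := by
    rw [← phi.hom_inv_id, sc_comp_right, sc_eq_comp, sc_unit]
    simp
  rw [← sc_id_tensor_id] at h1
  exact cancel_tensor_right ((β_ k X) ≪≫ phi) h1

theorem sc_inj {X k : C} (phi : X ⊗ k ≅ 𝟙_ C) {z : 𝟙_ C ⟶ 𝟙_ C}
    (h : sc z (𝟙 X) = 𝟙 X) : z = 𝟙 (𝟙_ C) := by
  have : z = sc z (𝟙 (𝟙_ C)) := (sc_unit z).symm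
  rw [this, ← phi.inv_hom_id, sc_comp_right, sc_eq_comp, ← sc_id_tensor_id, h]
  simp


section WithSymmetric
variable [SymmetricCategory C]

theorem tensor_mem_of_comp_mem (M : HomIdeal C)
    (hinv : ∀ x : C, ∃ x' : C, Nonempty (x ⊗ x' ≅ 𝟙_ C))
    {g h l : C} (r : g ⟶ h) (s : h ⟶ l) (hrs : r ≫ s ∈ M.carrier g l) :
    r ⊗ₘ s ∈ M.carrier (g ⊗ h) (h ⊗ l) := by
  obtain ⟨h', ⟨φh⟩⟩ := hinv h
  obtain ⟨u, hu⟩ := sc_surj (tensorInvIso φh φh) (β_ h h).hom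
  have huu : sc (u ≫ u) (𝟙 (h ⊗ h)) = 𝟙 (h ⊗ h) := by
    rw [← sc_sc, hu, sc_eq_comp, hu, SymmetricCategory.symmetry]
  have hu1 : u ≫ u = 𝟙 (𝟙_ C) := sc_inj (tensorInvIso φh φh) huu
  have hsplit : r ⊗ₘ s = (r ⊗ₘ 𝟙 h) ≫ (𝟙 h ⊗ₘ s) := by
    rw [MonoidalCategory.tensorHom_comp_tensorHom]; simp
  have hX : sc u (r ⊗ₘ s) = (β_ g h).hom ≫ (𝟙 h ⊗ₘ (r ≫ s)) := by
    rw [hsplit, sc_comp_right, sc_eq_comp, hu, ← Category.assoc,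
      BraidedCategory.braiding_naturality, Category.assoc,
      MonoidalCategory.tensorHom_comp_tensorHom]
    simp
  have hmem : sc u (r ⊗ₘ s) ∈ M.carrier (g ⊗ h) (h ⊗ l) := by
    rw [hX]
    exact M.comp_right _ _ (M.tensor_left (𝟙 h) _ hrs)
  have hfin : r ⊗ₘ s = sc u (𝟙 (g ⊗ h)) ≫ sc u (r ⊗ₘ s) := by
    rw [← sc_eq_comp, sc_sc, hu1, sc_one]
  rw [hfin]
  exact M.comp_right _ _ hmem

end WithSymmetric

section Gen
variable [MonoidalPreadditive C]

theorem tensor_neg' {a b x y : C} (f : a ⟶ b) (g : x ⟶ y) : f ⊗ₘ (-g) = -(f ⊗ₘ g) :=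
  (AddMonoidHom.mk' (fun g : x ⟶ y => f ⊗ₘ g) (MonoidalPreadditive.tensor_add f)).map_neg g

theorem neg_tensor' {a b x y : C} (f : a ⟶ b) (g : x ⟶ y) : (-f) ⊗ₘ g = -(f ⊗ₘ g) :=
  (AddMonoidHom.mk' (fun f : a ⟶ b => f ⊗ₘ g)
    (fun f₁ f₂ => MonoidalPreadditive.add_tensor f₁ f₂ g)).map_neg f

/-- Generators of the ideal generated by a single morphism `r`. -/
def genSet {g h : C} (r : g ⟶ h) (x y : C) : Set (x ⟶ y) :=
  {f | ∃ (p : C) (a : x ⟶ p ⊗ g) (b : p ⊗ h ⟶ y), f = a ≫ (𝟙 p ⊗ₘ r) ≫ b}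

theorem genClosure_stable {g h : C} (r : g ⟶ h) {x y x' y' : C}
    (F : (x ⟶ y) →+ (x' ⟶ y'))
    (hF : ∀ f ∈ genSet r x y, F f ∈ AddSubgroup.closure (genSet r x' y'))
    {f : x ⟶ y} (hf : f ∈ AddSubgroup.closure (genSet r x y)) :
    F f ∈ AddSubgroup.closure (genSet r x' y') :=
  (AddSubgroup.closure_le ((AddSubgroup.closure (genSet r x' y')).comap F)).2 hF hf

theorem genClosure_comp_left {g h : C} (r : g ⟶ h) {x y y' : C} (c : y ⟶ y')
    {t : x ⟶ y} (ht : t ∈ AddSubgroup.closure (genSet r x y)) :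
    t ≫ c ∈ AddSubgroup.closure (genSet r x y') := by
  refine genClosure_stable r (AddMonoidHom.mk' (fun t : x ⟶ y => t ≫ c)
    (fun a b => Preadditive.add_comp _ _ _ _ _ _) ) ?_ ht
  rintro f ⟨p, a, b, rfl⟩
  exact AddSubgroup.subset_closure ⟨p, a, b ≫ c, by simp⟩

theorem genClosure_comp_right {g h : C} (r : g ⟶ h) {x x' y : C} (c : x' ⟶ x)
    {t : x ⟶ y} (ht : t ∈ AddSubgroup.closure (genSet r x y)) :
    c ≫ t ∈ AddSubgroup.closure (genSet r x' y) := by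
  refine genClosure_stable r (AddMonoidHom.mk' (fun t : x ⟶ y => c ≫ t)
    (fun a b => Preadditive.comp_add _ _ _ _ _ _) ) ?_ ht
  rintro f ⟨p, a, b, rfl⟩
  exact AddSubgroup.subset_closure ⟨p, c ≫ a, b, by simp⟩

theorem genClosure_tensor_left {g h : C} (r : g ⟶ h) {x y x' y' : C} (c : x' ⟶ y')
    {t : x ⟶ y} (ht : t ∈ AddSubgroup.closure (genSet r x y)) :
    c ⊗ₘ t ∈ AddSubgroup.closure (genSet r (x' ⊗ x) (y' ⊗ y)) := by
  refine genClosure_stable r (AddMonoidHom.mk' (fun t : x ⟶ y => c ⊗ₘ t)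
    (MonoidalPreadditive.tensor_add c)) ?_ ht
  rintro f ⟨p, a, b, rfl⟩
  simp only [AddMonoidHom.mk'_apply]
  refine AddSubgroup.subset_closure
    ⟨y' ⊗ p, (c ⊗ₘ a) ≫ (α_ y' p g).inv, (α_ y' p h).hom ≫ (𝟙 y' ⊗ₘ b), ?_⟩
  have h1 : c ⊗ₘ (a ≫ (𝟙 p ⊗ₘ r) ≫ b)
      = (c ⊗ₘ a) ≫ (𝟙 y' ⊗ₘ (𝟙 p ⊗ₘ r)) ≫ (𝟙 y' ⊗ₘ b) := by
    rw [MonoidalCategory.tensorHom_comp_tensorHom, MonoidalCategory.tensorHom_comp_tensorHom]; simp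
  have h2 : 𝟙 y' ⊗ₘ (𝟙 p ⊗ₘ r)
      = (α_ y' p g).inv ≫ (𝟙 (y' ⊗ p) ⊗ₘ r) ≫ (α_ y' p h).hom := by
    rw [← MonoidalCategory.id_tensorHom_id, MonoidalCategory.associator_naturality]
    simp
  rw [h1, h2]; simp

theorem genClosure_tensor_right [SymmetricCategory C] {g h : C} (r : g ⟶ h)
    {x y x' y' : C} (c : x' ⟶ y')
    {t : x ⟶ y} (ht : t ∈ AddSubgroup.closure (genSet r x y)) :
    t ⊗ₘ c ∈ AddSubgroup.closure (genSet r (x ⊗ x') (y ⊗ y')) := by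
  refine genClosure_stable r (AddMonoidHom.mk' (fun t : x ⟶ y => t ⊗ₘ c)
    (fun a b => MonoidalPreadditive.add_tensor a b c)) ?_ ht
  rintro f ⟨p, a, b, rfl⟩
  simp only [AddMonoidHom.mk'_apply]
  have hr : r ⊗ₘ 𝟙 y' = (β_ g y').hom ≫ (𝟙 y' ⊗ₘ r) ≫ (β_ h y').inv := by
    rw [← BraidedCategory.braiding_naturality_assoc]; simp
  have h1 : (a ≫ (𝟙 p ⊗ₘ r) ≫ b) ⊗ₘ c
      = (a ⊗ₘ c) ≫ ((𝟙 p ⊗ₘ r) ⊗ₘ 𝟙 y') ≫ (b ⊗ₘ 𝟙 y') := by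
    rw [MonoidalCategory.tensorHom_comp_tensorHom, MonoidalCategory.tensorHom_comp_tensorHom]; simp
  have h2 : (𝟙 p ⊗ₘ r) ⊗ₘ 𝟙 y'
      = (α_ p g y').hom ≫ (𝟙 p ⊗ₘ (r ⊗ₘ 𝟙 y')) ≫ (α_ p h y').inv := by
    rw [← MonoidalCategory.associator_naturality_assoc]; simp
  have h3 : 𝟙 p ⊗ₘ (r ⊗ₘ 𝟙 y')
      = (𝟙 p ⊗ₘ (β_ g y').hom) ≫ (𝟙 p ⊗ₘ (𝟙 y' ⊗ₘ r)) ≫ (𝟙 p ⊗ₘ (β_ h y').inv) := by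
    rw [MonoidalCategory.tensorHom_comp_tensorHom, MonoidalCategory.tensorHom_comp_tensorHom, ← hr]; simp
  have h4 : 𝟙 p ⊗ₘ (𝟙 y' ⊗ₘ r)
      = (α_ p y' g).inv ≫ (𝟙 (p ⊗ y') ⊗ₘ r) ≫ (α_ p y' h).hom := by
    rw [← MonoidalCategory.id_tensorHom_id, MonoidalCategory.associator_naturality]
    simp
  rw [h1, h2, h3, h4]
  exact AddSubgroup.subset_closure
    ⟨p ⊗ y', (a ⊗ₘ c) ≫ (α_ p g y').hom ≫ (𝟙 p ⊗ₘ (β_ g y').hom) ≫ (α_ p y' g).inv,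
      (α_ p y' h).hom ≫ (𝟙 p ⊗ₘ (β_ h y').inv) ≫ (α_ p h y').inv ≫ (b ⊗ₘ 𝟙 y'), by simp⟩

/-- The ideal generated by `M` and a single morphism `r`. -/
def genIdeal [SymmetricCategory C] (M : HomIdeal C) {g h : C} (r : g ⟶ h) : HomIdeal C where
  carrier x y := M.carrier x y ⊔ AddSubgroup.closure (genSet r x y)
  comp_left {x y y'} f c hf := by
    rw [AddSubgroup.mem_sup] at hf ⊢
    obtain ⟨m, hm, t, ht, rfl⟩ := hf
    exact ⟨m ≫ c, M.comp_left _ _ hm, t ≫ c, genClosure_comp_left r c ht,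
      (Preadditive.add_comp _ _ _ _ _ _).symm⟩
  comp_right {x' x y} c f hf := by
    rw [AddSubgroup.mem_sup] at hf ⊢
    obtain ⟨m, hm, t, ht, rfl⟩ := hf
    exact ⟨c ≫ m, M.comp_right _ _ hm, c ≫ t, genClosure_comp_right r c ht,
      (Preadditive.comp_add _ _ _ _ _ _).symm⟩
  tensor_left {x y x' y'} c f hf := by
    rw [AddSubgroup.mem_sup] at hf ⊢
    obtain ⟨m, hm, t, ht, rfl⟩ := hf
    exact ⟨c ⊗ₘ m, M.tensor_left _ _ hm, c ⊗ₘ t, genClosure_tensor_left r c ht,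
      (MonoidalPreadditive.tensor_add c _ _).symm⟩
  tensor_right {x y x' y'} f c hf := by
    rw [AddSubgroup.mem_sup] at hf ⊢
    obtain ⟨m, hm, t, ht, rfl⟩ := hf
    exact ⟨m ⊗ₘ c, M.tensor_right _ _ hm, t ⊗ₘ c, genClosure_tensor_right r c ht,
      (MonoidalPreadditive.add_tensor _ _ c).symm⟩

theorem le_genIdeal [SymmetricCategory C] (M : HomIdeal C) {g h : C} (r : g ⟶ h) :
    M ≤ genIdeal M r := fun x y => le_sup_left

theorem mem_genIdeal_self [SymmetricCategory C] (M : HomIdeal C) {g h : C} (r : g ⟶ h) :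
    r ∈ (genIdeal M r).carrier g h := by
  have : r = (λ_ g).inv ≫ (𝟙 (𝟙_ C) ⊗ₘ r) ≫ (λ_ h).hom := by
    simp [MonoidalCategory.id_tensorHom, MonoidalCategory.leftUnitor_naturality]
  refine SetLike.le_def.1 le_sup_right (AddSubgroup.subset_closure ?_)
  exact ⟨𝟙_ C, (λ_ g).inv, (λ_ h).hom, this⟩

end Gen

section Main
variable [MonoidalPreadditive C] [SymmetricCategory C]

set_option maxHeartbeats 1600000 in
theorem cross_mem (M : HomIdeal C)
    (hinv : ∀ x : C, ∃ x' : C, Nonempty (x ⊗ x' ≅ 𝟙_ C))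
    {g h l : C} (r : g ⟶ h) (s : h ⟶ l) (hrs : r ≫ s ∈ M.carrier g l)
    {x₁ y₁ x₂ y₂ : C} {t : x₁ ⟶ y₁} (ht : t ∈ AddSubgroup.closure (genSet r x₁ y₁))
    {t' : x₂ ⟶ y₂} (ht' : t' ∈ AddSubgroup.closure (genSet s x₂ y₂)) :
    t ⊗ₘ t' ∈ M.carrier (x₁ ⊗ x₂) (y₁ ⊗ y₂) := by
  induction ht using AddSubgroup.closure_induction with
  | zero => rw [MonoidalPreadditive.zero_tensor]; exact zero_mem _
  | add f f' _ _ hf hf' =>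
      rw [MonoidalPreadditive.add_tensor]; exact add_mem hf hf'
  | neg f _ hf => rw [neg_tensor']; exact neg_mem hf
  | mem f hfgen =>
      induction ht' using AddSubgroup.closure_induction with
      | zero => rw [MonoidalPreadditive.tensor_zero]; exact zero_mem _
      | add f' f'' _ _ hf' hf'' =>
          rw [MonoidalPreadditive.tensor_add]; exact add_mem hf' hf''
      | neg f' _ hf' => rw [tensor_neg']; exact neg_mem hf'
      | mem f' hf'gen =>
          obtain ⟨p, a, b, rfl⟩ := hfgen
          obtain ⟨q, a', b', rfl⟩ := hf'gen
          have step1 : r ⊗ₘ s ∈ M.carrier (g ⊗ h) (h ⊗ l) :=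
            tensor_mem_of_comp_mem M hinv r s hrs
          have step2 : (r ⊗ₘ s) ⊗ₘ 𝟙 q ∈ M.carrier ((g ⊗ h) ⊗ q) ((h ⊗ l) ⊗ q) :=
            M.tensor_right _ (𝟙 q) step1
          have e3 : r ⊗ₘ (s ⊗ₘ 𝟙 q)
              = (α_ g h q).inv ≫ ((r ⊗ₘ s) ⊗ₘ 𝟙 q) ≫ (α_ h l q).hom := by
            rw [MonoidalCategory.associator_naturality]; simp
          have step3 : r ⊗ₘ (s ⊗ₘ 𝟙 q) ∈ M.carrier (g ⊗ (h ⊗ q)) (h ⊗ (l ⊗ q)) := by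
            rw [e3]
            exact M.comp_right _ _ (M.comp_left _ _ step2)
          have hs' : 𝟙 q ⊗ₘ s = (β_ h q).inv ≫ (s ⊗ₘ 𝟙 q) ≫ (β_ l q).hom := by
            rw [BraidedCategory.braiding_naturality]; simp
          have e4 : r ⊗ₘ (𝟙 q ⊗ₘ s)
              = (𝟙 g ⊗ₘ (β_ h q).inv) ≫ (r ⊗ₘ (s ⊗ₘ 𝟙 q)) ≫ (𝟙 h ⊗ₘ (β_ l q).hom) := by
            rw [hs']
            conv_rhs => rw [MonoidalCategory.tensorHom_comp_tensorHom, MonoidalCategory.tensorHom_comp_tensorHom]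
            simp
          have step4 : r ⊗ₘ (𝟙 q ⊗ₘ s) ∈ M.carrier (g ⊗ (q ⊗ h)) (h ⊗ (q ⊗ l)) := by
            rw [e4]
            exact M.comp_right _ _ (M.comp_left _ _ step3)
          have step5 : 𝟙 p ⊗ₘ (r ⊗ₘ (𝟙 q ⊗ₘ s)) ∈
              M.carrier (p ⊗ (g ⊗ (q ⊗ h))) (p ⊗ (h ⊗ (q ⊗ l))) :=
            M.tensor_left (𝟙 p) _ step4
          have e6 : (𝟙 p ⊗ₘ r) ⊗ₘ (𝟙 q ⊗ₘ s)
              = (α_ p g (q ⊗ h)).hom ≫ (𝟙 p ⊗ₘ (r ⊗ₘ (𝟙 q ⊗ₘ s))) ≫ (α_ p h (q ⊗ l)).inv := by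
            rw [← MonoidalCategory.associator_naturality_assoc]; simp
          have step6 : (𝟙 p ⊗ₘ r) ⊗ₘ (𝟙 q ⊗ₘ s) ∈
              M.carrier ((p ⊗ g) ⊗ (q ⊗ h)) ((p ⊗ h) ⊗ (q ⊗ l)) := by
            rw [e6]
            exact M.comp_right _ _ (M.comp_left _ _ step5)
          have e7 : (a ≫ (𝟙 p ⊗ₘ r) ≫ b) ⊗ₘ (a' ≫ (𝟙 q ⊗ₘ s) ≫ b')
              = (a ⊗ₘ a') ≫ ((𝟙 p ⊗ₘ r) ⊗ₘ (𝟙 q ⊗ₘ s)) ≫ (b ⊗ₘ b') := by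
            rw [MonoidalCategory.tensorHom_comp_tensorHom, MonoidalCategory.tensorHom_comp_tensorHom]
          rw [e7]
          exact M.comp_right _ _ (M.comp_left _ _ step6)

end Main

section Zorn
variable [MonoidalPreadditive C]

theorem id_ne_zero (hinv : ∀ x : C, ∃ x' : C, Nonempty (x ⊗ x' ≅ 𝟙_ C))
    (h1 : 𝟙 (𝟙_ C) ≠ 0) (g : C) : 𝟙 g ≠ 0 := by
  intro hg
  obtain ⟨g', ⟨φ⟩⟩ := hinv g
  apply h1
  have : 𝟙 (𝟙_ C) = φ.inv ≫ (𝟙 g ⊗ₘ 𝟙 g') ≫ φ.hom := by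
    rw [MonoidalCategory.id_tensorHom_id]; simp
  rw [this, hg, MonoidalPreadditive.zero_tensor]
  simp

/-- The zero ideal. -/
def zeroIdeal : HomIdeal C where
  carrier _ _ := ⊥
  comp_left {g h h'} f s hf := by
    rw [AddSubgroup.mem_bot] at hf ⊢
    rw [hf]; simp
  comp_right {g' g h} t f hf := by
    rw [AddSubgroup.mem_bot] at hf ⊢
    rw [hf]; simp
  tensor_left {g h g' h'} s f hf := by
    rw [AddSubgroup.mem_bot] at hf ⊢
    rw [hf, MonoidalPreadditive.tensor_zero]
  tensor_right {g h g' h'} f s hf := by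
    rw [AddSubgroup.mem_bot] at hf ⊢
    rw [hf, MonoidalPreadditive.zero_tensor]

/-- The supremum of a nonempty chain of homogeneous ideals. -/
def chainSup (c : Set (HomIdeal C)) (hc : IsChain (· ≤ ·) c) (hne : c.Nonempty) :
    HomIdeal C where
  carrier g h := ⨆ I : c, (I : HomIdeal C).carrier g h
  comp_left {g h h'} f s hf := by
    haveI : Nonempty c := hne.to_subtype
    rw [AddSubgroup.mem_iSup_of_directed (fun I J =>
      (hc.total I.2 J.2).elim (fun h' => ⟨J, h' g h, le_rfl⟩)
        (fun h' => ⟨I, le_rfl, h' g h⟩))] at hf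
    obtain ⟨I, hI⟩ := hf
    exact le_iSup (fun I : c => (I : HomIdeal C).carrier g h') I
      ((I : HomIdeal C).comp_left f s hI)
  comp_right {g' g h} t f hf := by
    haveI : Nonempty c := hne.to_subtype
    rw [AddSubgroup.mem_iSup_of_directed (fun I J =>
      (hc.total I.2 J.2).elim (fun h' => ⟨J, h' g h, le_rfl⟩)
        (fun h' => ⟨I, le_rfl, h' g h⟩))] at hf
    obtain ⟨I, hI⟩ := hf
    exact le_iSup (fun I : c => (I : HomIdeal C).carrier g' h) I
      ((I : HomIdeal C).comp_right t f hI)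
  tensor_left {g h g' h'} s f hf := by
    haveI : Nonempty c := hne.to_subtype
    rw [AddSubgroup.mem_iSup_of_directed (fun I J =>
      (hc.total I.2 J.2).elim (fun h' => ⟨J, h' g h, le_rfl⟩)
        (fun h' => ⟨I, le_rfl, h' g h⟩))] at hf
    obtain ⟨I, hI⟩ := hf
    exact le_iSup (fun I : c => (I : HomIdeal C).carrier (g' ⊗ g) (h' ⊗ h)) I
      ((I : HomIdeal C).tensor_left s f hI)
  tensor_right {g h g' h'} f s hf := by
    haveI : Nonempty c := hne.to_subtype
    rw [AddSubgroup.mem_iSup_of_directed (fun I J =>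
      (hc.total I.2 J.2).elim (fun h' => ⟨J, h' g h, le_rfl⟩)
        (fun h' => ⟨I, le_rfl, h' g h⟩))] at hf
    obtain ⟨I, hI⟩ := hf
    exact le_iSup (fun I : c => (I : HomIdeal C).carrier (g ⊗ g') (h ⊗ h')) I
      ((I : HomIdeal C).tensor_right f s hI)

theorem le_chainSup (c : Set (HomIdeal C)) (hc : IsChain (· ≤ ·) c) (hne : c.Nonempty)
    {I : HomIdeal C} (hI : I ∈ c) : I ≤ chainSup c hc hne := by
  intro g h
  exact le_iSup (fun I : c => (I : HomIdeal C).carrier g h) ⟨I, hI⟩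

theorem chainSup_proper (c : Set (HomIdeal C)) (hc : IsChain (· ≤ ·) c) (hne : c.Nonempty)
    (hS : ∀ I ∈ c, HomIdeal.IsProper I) : (chainSup c hc hne).IsProper := by
  intro g hg
  haveI : Nonempty c := hne.to_subtype
  have := (AddSubgroup.mem_iSup_of_directed (fun I J =>
      (hc.total I.2 J.2).elim (fun h' => ⟨J, h' g g, le_rfl⟩)
        (fun h' => ⟨I, le_rfl, h' g g⟩))).1 hg
  obtain ⟨I, hI⟩ := this
  exact hS I I.2 g hI

variable [SymmetricCategory C]

theorem exists_prime (hinv : ∀ x : C, ∃ x' : C, Nonempty (x ⊗ x' ≅ 𝟙_ C))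
    (h1 : 𝟙 (𝟙_ C) ≠ 0) : ∃ p : HomIdeal C, p.IsPrime := by
  have h0 : (zeroIdeal : HomIdeal C).IsProper := by
    intro g hg
    rw [zeroIdeal] at hg
    exact id_ne_zero hinv h1 g (AddSubgroup.mem_bot.1 hg)
  obtain ⟨M, -, hM⟩ := zorn_le_nonempty₀ {I : HomIdeal C | I.IsProper}
    (fun c hcS hc y hy => ⟨chainSup c hc ⟨y, hy⟩,
      chainSup_proper c hc ⟨y, hy⟩ (fun I hI => hcS hI),
      fun I hI => le_chainSup c hc ⟨y, hy⟩ hI⟩) zeroIdeal h0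
  refine ⟨M, ⟨hM.1, ?_⟩⟩
  intro g h l r s hrs
  by_contra hcon
  push_neg at hcon
  obtain ⟨hr, hs⟩ := hcon
  have himpr : ¬ (genIdeal M r).IsProper := fun hprop =>
    hr (hM.2 hprop (le_genIdeal M r) g h (mem_genIdeal_self M r))
  have himps : ¬ (genIdeal M s).IsProper := fun hprop =>
    hs (hM.2 hprop (le_genIdeal M s) h l (mem_genIdeal_self M s))
  rw [HomIdeal.IsProper] at himpr himps
  push_neg at himpr himps
  obtain ⟨x, hx⟩ := himpr
  obtain ⟨y, hy⟩ := himps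
  rw [genIdeal, AddSubgroup.mem_sup] at hx hy
  obtain ⟨m, hm, t, ht, hsum⟩ := hx
  obtain ⟨m', hm', t', ht', hsum'⟩ := hy
  have hid : 𝟙 (x ⊗ y) = m ⊗ₘ (m' + t') + (t ⊗ₘ m' + t ⊗ₘ t') := by
    calc 𝟙 (x ⊗ y) = 𝟙 x ⊗ₘ 𝟙 y := (MonoidalCategory.id_tensorHom_id x y).symm
      _ = (m + t) ⊗ₘ (m' + t') := by rw [hsum, hsum']
      _ = m ⊗ₘ (m' + t') + t ⊗ₘ (m' + t') := MonoidalPreadditive.add_tensor _ _ _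
      _ = m ⊗ₘ (m' + t') + (t ⊗ₘ m' + t ⊗ₘ t') := by
          rw [MonoidalPreadditive.tensor_add t]
  refine hM.1 (x ⊗ y) ?_
  rw [hid]
  exact add_mem (M.tensor_right _ _ hm)
    (add_mem (M.tensor_left _ _ hm') (cross_mem M hinv r s hrs ht ht'))

end Zorn

end GC2Aux

end AuxProofs

/-- **Statement 9.** The spectrum of a graded commutative 2-ring is empty if and only
if the identity of the tensor unit is zero; equivalently, every object is a zero
object (the category is equivalent to the zero category); equivalently, every
morphism is invertible. -/
theorem spec_empty_iff_trivial
    {C : Type u} [Category.{v} C] [Preadditive C] [MonoidalCategory C]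
    [SymmetricCategory C] [MonoidalPreadditive C] [GradedComm2Ring C] :
    (IsEmpty (Spec C) ↔ 𝟙 (𝟙_ C) = 0) ∧
    (𝟙 (𝟙_ C) = 0 ↔ ∀ x : C, IsZero x) ∧
    (𝟙 (𝟙_ C) = 0 ↔ ∀ {g h : C} (f : g ⟶ h), IsIso f) := by
  have h23 : 𝟙 (𝟙_ C) = 0 ↔ ∀ x : C, IsZero x := by
    constructor
    · intro h0 x
      rw [IsZero.iff_id_eq_zero]
      have hx : 𝟙 x = (ρ_ x).inv ≫ (𝟙 x ⊗ₘ 𝟙 (𝟙_ C)) ≫ (ρ_ x).hom := by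
        rw [MonoidalCategory.id_tensorHom_id]; simp
      rw [hx, h0, MonoidalPreadditive.tensor_zero]
      simp
    · intro h
      exact (h (𝟙_ C)).eq_of_src _ _
  have h24 : 𝟙 (𝟙_ C) = 0 ↔ ∀ {g h : C} (f : g ⟶ h), IsIso f := by
    constructor
    · intro h0 g h f
      have hz := h23.1 h0
      exact ⟨0, (hz g).eq_of_src _ _, (hz h).eq_of_src _ _⟩
    · intro h
      have : IsIso (0 : 𝟙_ C ⟶ 𝟙_ C) := h 0
      rw [← IsIso.hom_inv_id (0 : 𝟙_ C ⟶ 𝟙_ C), Limits.zero_comp]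
  have h12 : IsEmpty (Spec C) ↔ 𝟙 (𝟙_ C) = 0 := by
    constructor
    · intro he
      by_contra h0
      obtain ⟨p, hp⟩ := GC2Aux.exists_prime
        (fun x => GradedComm2Ring.invertible x) h0
      exact he.false ⟨p, hp⟩
    · intro h0
      exact ⟨fun p => p.2.isProper (𝟙_ C) (by rw [h0]; exact zero_mem _)⟩
  exact ⟨h12, h23, h24⟩
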